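/- Let n ≥ 0, let R = ℚ[x_1,…,x_n], let e_1,…,e_n ∈ R be the elementary symmetric polynomials, and let c_k = e_k(1,2,…,n). Then the ideal I = (e_1−c_1,…,e_n−c_n) ⊂ R equals the ideal of all polynomials f ∈ R such that f(σ(1),…,σ(n)) = 0 for every permutation σ of {1,…,n}. -/

import Mathlib

open MvPolynomial

/-- `c k` is the value of the `k`-th elementary symmetric polynomial at `(1,2,…,n)`. -/
noncomputable def cval (n k : ℕ) : ℚ :=
  eval (fun i : Fin n => ((i : ℕ) : ℚ) + 1) (esymm (Fin n) ℚ k)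

lemma eval_esymm {n : ℕ} (g : Fin n → ℚ) (k : ℕ) :
    eval g (esymm (Fin n) ℚ k) = (Finset.univ.val.map g).esymm k := by
  simp_rw [esymm, map_sum, map_prod, eval_X, Finset.esymm_map_val]

lemma gval_injective (n : ℕ) : Function.Injective (fun j : Fin n => ((j : ℕ) : ℚ) + 1) := by
  intro a b h
  simp only [add_left_inj, Nat.cast_inj] at h
  exact Fin.val_injective h

lemma eval_perm_esymm {n : ℕ} (σ : Equiv.Perm (Fin n)) (k : ℕ) :
    eval (fun i : Fin n => ((σ i : ℕ) : ℚ) + 1) (esymm (Fin n) ℚ k) = cval n k := by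
  have := eval_rename (σ : Fin n → Fin n) (fun j : Fin n => ((j : ℕ) : ℚ) + 1)
    (esymm (Fin n) ℚ k)
  rw [rename_esymm] at this
  exact this.symm.trans rfl

lemma exists_perm_of_esymm_eq {n : ℕ} (w : Fin n → Fin n)
    (h : ∀ k : Fin n, eval (fun i => ((w i : ℕ) : ℚ) + 1) (esymm (Fin n) ℚ ((k : ℕ) + 1))
        = cval n ((k : ℕ) + 1)) :
    Function.Bijective w := by
  classical
  set g : Fin n → ℚ := fun j => ((j : ℕ) : ℚ) + 1 with hg
  set s : Multiset ℚ := Finset.univ.val.map (fun i => g (w i)) with hs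
  set t : Multiset ℚ := Finset.univ.val.map g with ht
  have hcard : Multiset.card s = n ∧ Multiset.card t = n := by simp [hs, ht]
  -- all elementary symmetric functions agree
  have hesymm : ∀ d : ℕ, s.esymm d = t.esymm d := by
    intro d
    rcases Nat.eq_zero_or_pos d with rfl | hd
    · simp [Multiset.esymm]
    rcases le_or_gt d n with hdn | hdn
    · have hk : d - 1 < n := by omega
      have := h ⟨d - 1, hk⟩
      have hd1 : (d - 1) + 1 = d := by omega
      rw [hd1] at this
      have h1 : s.esymm d = eval (fun i => g (w i)) (esymm (Fin n) ℚ d) :=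
        (eval_esymm _ _).symm
      have h2 : t.esymm d = eval g (esymm (Fin n) ℚ d) := (eval_esymm _ _).symm
      rw [h1, h2]
      exact this.trans rfl
    · have h1 : s.esymm d = 0 := by
        rw [Multiset.esymm, Multiset.powersetCard_eq_empty]
        · simp
        · simp [hs]; omega
      have h2 : t.esymm d = 0 := by
        rw [Multiset.esymm, Multiset.powersetCard_eq_empty]
        · simp
        · simp [ht]; omega
      rw [h1, h2]
  -- hence the two polynomials ∏ (X - C a) agree
  have hpoly : (s.map fun a => Polynomial.X - Polynomial.C a).prod = (t.map fun a => Polynomial.X - Polynomial.C a).prod := by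
    ext k
    rcases le_or_gt k n with hk | hk
    · rw [Multiset.prod_X_sub_C_coeff s (by omega : k ≤ Multiset.card s),
        Multiset.prod_X_sub_C_coeff t (by omega : k ≤ Multiset.card t),
        hcard.1, hcard.2, hesymm]
    · have d1 : ((s.map fun a => Polynomial.X - Polynomial.C a).prod).natDegree < k := by
        refine lt_of_le_of_lt (le_trans (Polynomial.natDegree_multiset_prod_le _) ?_) hk
        simp only [Multiset.map_map, Function.comp]
        refine le_trans (Multiset.sum_le_card_nsmul _ 1 ?_) (by simp [hcard.1])
        intro x hx
        simp only [Multiset.mem_map] at hx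
        obtain ⟨a, _, rfl⟩ := hx
        exact Polynomial.natDegree_X_sub_C_le _
      have d2 : ((t.map fun a => Polynomial.X - Polynomial.C a).prod).natDegree < k := by
        refine lt_of_le_of_lt (le_trans (Polynomial.natDegree_multiset_prod_le _) ?_) hk
        simp only [Multiset.map_map, Function.comp]
        refine le_trans (Multiset.sum_le_card_nsmul _ 1 ?_) (by simp [hcard.2])
        intro x hx
        simp only [Multiset.mem_map] at hx
        obtain ⟨a, _, rfl⟩ := hx
        exact Polynomial.natDegree_X_sub_C_le _
      rw [Polynomial.coeff_eq_zero_of_natDegree_lt d1,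
        Polynomial.coeff_eq_zero_of_natDegree_lt d2]
  -- so the root multisets agree
  have hroots : s = t := by
    have := congrArg Polynomial.roots hpoly
    rwa [Polynomial.roots_multiset_prod_X_sub_C, Polynomial.roots_multiset_prod_X_sub_C] at this
  -- conclude w is bijective
  have : Multiset.map (g ∘ w) Finset.univ.val = Multiset.map g Finset.univ.val := by
    exact hroots
  rw [← Multiset.map_map] at this
  have hw : Multiset.map w Finset.univ.val = Finset.univ.val :=
    Multiset.map_injective (gval_injective n) this
  exact (Multiset.bijective_iff_map_univ_eq_univ w).mpr hw

lemma finSuccEquiv_rename_succ {m : ℕ} (c : MvPolynomial (Fin m) ℚ) :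
    finSuccEquiv ℚ m (rename Fin.succ c) = Polynomial.C c := by
  have : (finSuccEquiv ℚ m).toAlgHom.comp (rename (Fin.succ : Fin m → Fin (m+1)))
      = (Polynomial.CAlgHom : MvPolynomial (Fin m) ℚ →ₐ[ℚ] _) := by
    apply MvPolynomial.algHom_ext
    intro i
    simp [finSuccEquiv_X_succ, Polynomial.CAlgHom]
  exact congrArg (fun ψ => ψ c) (congrArg DFunLike.coe this)

lemma grid_vanish (n : ℕ) : ∀ (m : ℕ) (f : MvPolynomial (Fin m) ℚ),
    (∀ w : Fin m → Fin n, eval (fun i => ((w i : ℕ) : ℚ) + 1) f = 0) →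
    f ∈ Ideal.span (Set.range fun i : Fin m =>
      ∏ j : Fin n, (X i - C (((j : ℕ) : ℚ) + 1))) := by
  intro m
  induction m with
  | zero =>
    intro f hf
    obtain ⟨c, rfl⟩ := C_surjective (Fin 0) f
    have h0 := hf Fin.elim0
    rw [eval_C] at h0
    rw [h0, map_zero]
    exact Ideal.zero_mem _
  | succ m ih =>
    intro f hf
    classical
    set φ := finSuccEquiv ℚ m with hφ
    set Q : Polynomial (MvPolynomial (Fin m) ℚ) :=
      ∏ j : Fin n, (Polynomial.X - Polynomial.C (C (((j : ℕ) : ℚ) + 1))) with hQ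
    have hQmonic : Q.Monic :=
      Polynomial.monic_prod_of_monic _ _ fun j _ => Polynomial.monic_X_sub_C _
    have hQdeg : Q.natDegree = n := by
      rw [hQ, Polynomial.natDegree_prod_of_monic _ _ (fun j _ => Polynomial.monic_X_sub_C _)]
      simp only [Polynomial.natDegree_X_sub_C, Finset.sum_const, Finset.card_univ,
        Fintype.card_fin, smul_eq_mul, mul_one]
    set r := φ f %ₘ Q with hr
    set q := φ f /ₘ Q with hq
    have hdecomp : φ f = r + Q * q := (Polynomial.modByMonic_add_div (φ f) Q).symm
    -- coefficients of r vanish on the grid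
    have hrcoeff : ∀ d : ℕ, ∀ w : Fin m → Fin n,
        eval (fun i => ((w i : ℕ) : ℚ) + 1) (r.coeff d) = 0 := by
      intro d w
      set pw : Fin m → ℚ := fun i => ((w i : ℕ) : ℚ) + 1 with hpw
      have hmap0 : r.map (eval pw) = 0 := by
        set s : Finset ℚ := Finset.univ.image (fun a : Fin n => ((a : ℕ) : ℚ) + 1) with hs
        have hscard : s.card = n := by
          rw [hs, Finset.card_image_of_injective _ (by
            intro a b hab
            simp only [add_left_inj, Nat.cast_inj] at hab
            exact Fin.val_injective hab)]
          simp
        apply Polynomial.eq_zero_of_degree_lt_of_eval_finset_eq_zero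
        · calc (r.map (eval pw)).degree ≤ r.degree := Polynomial.degree_map_le
            _ < Q.degree := Polynomial.degree_modByMonic_lt _ hQmonic
            _ = (n : ℕ) := by
                rw [Polynomial.degree_eq_natDegree hQmonic.ne_zero, hQdeg]
            _ = (s.card : ℕ) := by rw [hscard]
        · intro x hx
          rw [hs, Finset.mem_image] at hx
          obtain ⟨a, -, rfl⟩ := hx
          -- evaluate the full polynomial at the grid point cons a w
          have hfull := hf (Fin.cons a w)
          have hpt : (fun i : Fin (m+1) => (((Fin.cons a w : Fin (m+1) → Fin n) i : ℕ) : ℚ) + 1)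
              = Fin.cons (((a : ℕ) : ℚ) + 1) pw := by
            funext i
            refine Fin.cases ?_ (fun j => ?_) i <;> simp [hpw]
          rw [hpt, eval_eq_eval_mv_eval'] at hfull
          -- expand via the division
          have hQeval : Polynomial.eval (((a : ℕ) : ℚ) + 1) (Q.map (eval pw)) = 0 := by
            rw [hQ, Polynomial.map_prod, Polynomial.eval_prod]
            refine Finset.prod_eq_zero (Finset.mem_univ a) ?_
            simp
          rw [hdecomp, Polynomial.map_add, Polynomial.map_mul, Polynomial.eval_add,
            Polynomial.eval_mul, hQeval, zero_mul, add_zero] at hfull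
          exact hfull
      have := congrArg (fun p => Polynomial.coeff p d) hmap0
      simpa [Polynomial.coeff_map] using this
    -- each coefficient of r is in the smaller ideal
    have hrmem : ∀ d : ℕ, r.coeff d ∈ Ideal.span (Set.range fun i : Fin m =>
        ∏ j : Fin n, (X i - C (((j : ℕ) : ℚ) + 1))) := fun d => ih _ (hrcoeff d)
    -- reassemble
    have hf_eq : f = φ.symm r + φ.symm Q * φ.symm q := by
      have := congrArg φ.symm hdecomp
      rwa [AlgEquiv.symm_apply_apply, map_add, map_mul] at this
    rw [hf_eq]
    set Sgen : Set (MvPolynomial (Fin (m+1)) ℚ) := Set.range fun i : Fin (m+1) =>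
      ∏ j : Fin n, (X i - C (((j : ℕ) : ℚ) + 1)) with hSgen
    have hQmem : φ.symm Q ∈ Ideal.span Sgen := by
      have hφQ : φ.symm Q = ∏ j : Fin n, (X (0 : Fin (m+1)) - C (((j : ℕ) : ℚ) + 1)) := by
        apply (finSuccEquiv ℚ m).injective
        rw [AlgEquiv.apply_symm_apply, map_prod]
        refine Finset.prod_congr rfl fun j _ => ?_
        rw [map_sub, finSuccEquiv_X_zero]
        have : (finSuccEquiv ℚ m) (C (((j : ℕ) : ℚ) + 1))
            = Polynomial.C (C (((j : ℕ) : ℚ) + 1)) := by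
          have := finSuccEquiv_comp_C_eq_C (R := ℚ) m
          have h2 := congrArg (fun ψ : ℚ →+* MvPolynomial (Fin (m+1)) ℚ =>
            ψ (((j : ℕ) : ℚ) + 1)) this
          simp only [RingHom.coe_comp, Function.comp_apply] at h2
          apply (finSuccEquiv ℚ m).symm.injective
          rw [AlgEquiv.symm_apply_apply]
          exact h2.symm
        rw [this]
      rw [hφQ]
      exact Ideal.subset_span ⟨0, rfl⟩
    refine Ideal.add_mem _ ?_ (Ideal.mul_mem_right _ _ hQmem)
    -- φ.symm r ∈ span
    have hsymm_r : φ.symm r = ∑ d ∈ r.support, rename Fin.succ (r.coeff d) * X 0 ^ d := by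
      apply (finSuccEquiv ℚ m).injective
      rw [AlgEquiv.apply_symm_apply, map_sum]
      conv_lhs => rw [Polynomial.as_sum_support r]
      refine Finset.sum_congr rfl fun d _ => ?_
      rw [map_mul, map_pow, finSuccEquiv_X_zero, finSuccEquiv_rename_succ,
        Polynomial.C_mul_X_pow_eq_monomial]
    rw [hsymm_r]
    refine Ideal.sum_mem _ fun d _ => Ideal.mul_mem_right _ _ ?_
    -- rename of a member of the small span is in the big span
    have := Ideal.mem_map_of_mem (rename (Fin.succ : Fin m → Fin (m+1))).toRingHom (hrmem d)
    rw [Ideal.map_span] at this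
    refine Ideal.span_le.mpr ?_ this
    rintro y ⟨y', ⟨i, rfl⟩, rfl⟩
    have : (rename (Fin.succ : Fin m → Fin (m+1))).toRingHom
        (∏ j : Fin n, (X i - C (((j : ℕ) : ℚ) + 1)))
        = ∏ j : Fin n, (X i.succ - C (((j : ℕ) : ℚ) + 1)) := by
      simp [map_prod, map_sub, rename_X, rename_C]
    rw [this]
    exact Ideal.subset_span ⟨i.succ, rfl⟩

noncomputable def permIdeal (n : ℕ) : Ideal (MvPolynomial (Fin n) ℚ) :=
  Ideal.span (Set.range (fun k : Fin n =>
    esymm (Fin n) ℚ ((k : ℕ) + 1) - C (cval n ((k : ℕ) + 1))))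

lemma cval_eq_sum (n d : ℕ) : cval n d
    = ∑ t ∈ Finset.powersetCard d (Finset.univ : Finset (Fin n)),
        ∏ j ∈ t, ((((j : ℕ) : ℚ)) + 1) := by
  rw [cval, esymm, map_sum]
  refine Finset.sum_congr rfl fun t _ => ?_
  rw [map_prod]
  exact Finset.prod_congr rfl fun j _ => by simp

lemma esymm_sub_cval_mem (n d : ℕ) :
    esymm (Fin n) ℚ d - C (cval n d) ∈ permIdeal n := by
  rcases Nat.eq_zero_or_pos d with rfl | hd
  · have : cval n 0 = 1 := by rw [cval, esymm_zero, map_one]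
    rw [this, esymm_zero, map_one, sub_self]
    exact Ideal.zero_mem _
  rcases le_or_gt d n with hdn | hdn
  · have hk : d - 1 < n := by omega
    have hd1 : (d - 1) + 1 = d := by omega
    have : esymm (Fin n) ℚ d - C (cval n d)
        = (fun k : Fin n => esymm (Fin n) ℚ ((k : ℕ) + 1) - C (cval n ((k : ℕ) + 1)))
          ⟨d - 1, hk⟩ := by simp only [hd1]
    rw [this]
    exact Ideal.subset_span ⟨⟨d - 1, hk⟩, rfl⟩
  · have h0 : esymm (Fin n) ℚ d = 0 := by
      rw [esymm, Finset.powersetCard_eq_empty.mpr (by simpa using hdn), Finset.sum_empty]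
    have hc : cval n d = 0 := by rw [cval, h0, map_zero]
    rw [h0, hc, map_zero, sub_self]
    exact Ideal.zero_mem _

lemma prod_mem_permIdeal (n : ℕ) (i : Fin n) :
    (∏ j : Fin n, (X i - C (((j : ℕ) : ℚ) + 1))) ∈ permIdeal n := by
  classical
  set A := MvPolynomial (Fin n) ℚ
  set U : Polynomial A := ∏ i' : Fin n, (Polynomial.X + Polynomial.C (-(X i'))) with hU
  set V : Polynomial A :=
    ∏ j : Fin n, (Polynomial.X + Polynomial.C (-(C (((j : ℕ) : ℚ) + 1)))) with hV
  have hprodneg : ∀ (t : Finset (Fin n)) (f : Fin n → A),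
      ∏ x ∈ t, -f x = (-1 : A) ^ t.card * ∏ x ∈ t, f x := by
    intro t f
    rw [← Finset.prod_const, ← Finset.prod_mul_distrib]
    exact Finset.prod_congr rfl fun x _ => (neg_one_mul _).symm
  have hcoeff : ∀ k, (V - U).coeff k ∈ permIdeal n := by
    intro k
    rcases le_or_gt k n with hk | hk
    · have hcard : k ≤ (Finset.univ : Finset (Fin n)).card := by simpa using hk
      rw [Polynomial.coeff_sub, Finset.prod_X_add_C_coeff _ _ hcard,
        Finset.prod_X_add_C_coeff _ _ hcard]
      have huniv : (Finset.univ : Finset (Fin n)).card = n := by simp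
      rw [huniv]
      have h1 : ∑ t ∈ Finset.powersetCard (n - k) (Finset.univ : Finset (Fin n)),
            ∏ x ∈ t, -(C (((x : ℕ) : ℚ) + 1) : A)
          = (-1 : A) ^ (n - k) * C (cval n (n - k)) := by
        rw [cval_eq_sum, map_sum, Finset.mul_sum]
        refine Finset.sum_congr rfl fun t ht => ?_
        rw [hprodneg t _, (Finset.mem_powersetCard.mp ht).2, map_prod]
      have h2 : ∑ t ∈ Finset.powersetCard (n - k) (Finset.univ : Finset (Fin n)),
            ∏ x ∈ t, -(X x : A)
          = (-1 : A) ^ (n - k) * esymm (Fin n) ℚ (n - k) := by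
        rw [esymm, Finset.mul_sum]
        refine Finset.sum_congr rfl fun t ht => ?_
        rw [hprodneg t _, (Finset.mem_powersetCard.mp ht).2]
      rw [h1, h2, ← mul_sub]
      have : (C (cval n (n - k)) - esymm (Fin n) ℚ (n - k))
          = -(esymm (Fin n) ℚ (n - k) - C (cval n (n - k))) := by ring
      rw [this]
      exact Ideal.mul_mem_left _ _ (neg_mem (esymm_sub_cval_mem n (n - k)))
    · have hdV : V.natDegree < k := by
        refine lt_of_le_of_lt (le_trans (Polynomial.natDegree_prod_le _ _) ?_) hk
        refine le_trans (Finset.sum_le_card_nsmul _ _ 1 fun x _ =>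
          (Polynomial.natDegree_X_add_C _).le) (by simp)
      have hdU : U.natDegree < k := by
        refine lt_of_le_of_lt (le_trans (Polynomial.natDegree_prod_le _ _) ?_) hk
        refine le_trans (Finset.sum_le_card_nsmul _ _ 1 fun x _ =>
          (Polynomial.natDegree_X_add_C _).le) (by simp)
      rw [Polynomial.coeff_sub, Polynomial.coeff_eq_zero_of_natDegree_lt hdV,
        Polynomial.coeff_eq_zero_of_natDegree_lt hdU, sub_self]
      exact Ideal.zero_mem _
  have hU0 : Polynomial.eval (X i : A) U = 0 := by
    rw [hU, Polynomial.eval_prod]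
    refine Finset.prod_eq_zero (Finset.mem_univ i) ?_
    simp
  have hVeval : Polynomial.eval (X i : A) V = ∏ j : Fin n, (X i - C (((j : ℕ) : ℚ) + 1)) := by
    rw [hV, Polynomial.eval_prod]
    refine Finset.prod_congr rfl fun j _ => ?_
    simp [sub_eq_add_neg]
  have key : (∏ j : Fin n, (X i - C (((j : ℕ) : ℚ) + 1)))
      = Polynomial.eval (X i : A) (V - U) := by
    rw [Polynomial.eval_sub, hU0, sub_zero, hVeval]
  rw [key, Polynomial.eval_eq_sum_range]
  exact Ideal.sum_mem _ fun k _ => Ideal.mul_mem_right _ _ (hcoeff k)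


/-- The ideal `I = (e_1 - c_1, …, e_n - c_n)` equals the ideal of all polynomials
vanishing at every permutation of `(1,…,n)`. -/
theorem permIdeal_eq_vanishing_ideal (n : ℕ) (f : MvPolynomial (Fin n) ℚ) :
    f ∈ Ideal.span (Set.range (fun k : Fin n =>
      esymm (Fin n) ℚ ((k : ℕ) + 1) - C (cval n ((k : ℕ) + 1)))) ↔
    ∀ σ : Equiv.Perm (Fin n),
      eval (fun i : Fin n => ((σ i : ℕ) : ℚ) + 1) f = 0 := by
  constructor
  · intro hf σ
    have hle : Ideal.span (Set.range (fun k : Fin n =>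
        esymm (Fin n) ℚ ((k : ℕ) + 1) - C (cval n ((k : ℕ) + 1))))
        ≤ RingHom.ker (eval (fun i : Fin n => ((σ i : ℕ) : ℚ) + 1)) := by
      rw [Ideal.span_le]
      rintro y ⟨k, rfl⟩
      simp only [SetLike.mem_coe, RingHom.mem_ker, map_sub, eval_C]
      rw [eval_perm_esymm σ, sub_self]
    exact hle hf
  · intro hf
    classical
    show f ∈ permIdeal n
    set G : Fin n → MvPolynomial (Fin n) ℚ := fun k =>
      esymm (Fin n) ℚ ((k : ℕ) + 1) - C (cval n ((k : ℕ) + 1)) with hG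
    set pt : (Fin n → Fin n) → (Fin n → ℚ) := fun w i => ((w i : ℕ) : ℚ) + 1 with hpt
    set δ : (Fin n → Fin n) → MvPolynomial (Fin n) ℚ := fun w =>
      ∏ i : Fin n, ∏ j ∈ Finset.univ.erase (w i), (X i - C (((j : ℕ) : ℚ) + 1)) with hδ
    have δ_self : ∀ w, eval (pt w) (δ w) ≠ 0 := by
      intro w
      rw [hδ, map_prod]
      rw [Finset.prod_ne_zero_iff]
      intro i _
      rw [map_prod, Finset.prod_ne_zero_iff]
      intro j hj
      rw [map_sub, eval_X, eval_C, sub_ne_zero]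
      intro hc
      exact (Finset.mem_erase.mp hj).1 (gval_injective n hc).symm
    have δ_other : ∀ w w', w ≠ w' → eval (pt w') (δ w) = 0 := by
      intro w w' hww
      obtain ⟨i, hi⟩ := Function.ne_iff.mp hww
      rw [hδ, map_prod]
      refine Finset.prod_eq_zero (Finset.mem_univ i) ?_
      rw [map_prod]
      refine Finset.prod_eq_zero (Finset.mem_erase.mpr ⟨fun hc => hi hc.symm, Finset.mem_univ _⟩) ?_
      rw [map_sub, eval_X, eval_C, sub_self]
    set g : MvPolynomial (Fin n) ℚ := ∑ w : Fin n → Fin n,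
      if h : ∃ k, eval (pt w) (G k) ≠ 0 then
        C (eval (pt w) f / (eval (pt w) (δ w) * eval (pt w) (G h.choose)))
          * δ w * G h.choose
      else 0 with hg
    have hgmem : g ∈ permIdeal n := by
      refine Ideal.sum_mem _ fun w _ => ?_
      by_cases h : ∃ k, eval (pt w) (G k) ≠ 0
      · rw [dif_pos h]
        exact Ideal.mul_mem_left _ _ (Ideal.subset_span ⟨h.choose, rfl⟩)
      · rw [dif_neg h]; exact Ideal.zero_mem _
    have hvanish : ∀ w' : Fin n → Fin n,
        eval (fun i => ((w' i : ℕ) : ℚ) + 1) (f - g) = 0 := by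
      intro w'
      show eval (pt w') (f - g) = 0
      rw [map_sub]
      by_cases hB : ∃ k, eval (pt w') (G k) ≠ 0
      · have hgval : eval (pt w') g = eval (pt w') f := by
          rw [hg, map_sum, Finset.sum_eq_single w']
          · rw [dif_pos hB, map_mul, map_mul, eval_C]
            have hδ0 : eval (pt w') (δ w') ≠ 0 := δ_self w'
            have hG0 : eval (pt w') (G hB.choose) ≠ 0 := hB.choose_spec
            field_simp
          · intro w _ hww
            by_cases h : ∃ k, eval (pt w) (G k) ≠ 0
            · rw [dif_pos h, map_mul, map_mul, δ_other w w' hww, mul_zero, zero_mul]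
            · rw [dif_neg h, map_zero]
          · intro h; exact absurd (Finset.mem_univ w') h
        rw [hgval, sub_self]
      · push_neg at hB
        have hperm : Function.Bijective w' := by
          refine exists_perm_of_esymm_eq w' fun k => ?_
          have h0 := hB k
          rw [hG] at h0
          simp only [map_sub, eval_C, sub_eq_zero] at h0
          exact h0
        have hfval : eval (pt w') f = 0 := hf (Equiv.ofBijective w' hperm)
        have hgval : eval (pt w') g = 0 := by
          rw [hg, map_sum]
          refine Finset.sum_eq_zero fun w _ => ?_
          by_cases h : ∃ k, eval (pt w) (G k) ≠ 0
          · rw [dif_pos h, map_mul, hB h.choose, mul_zero]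
          · rw [dif_neg h, map_zero]
        rw [hfval, hgval, sub_self]
    have hfg := grid_vanish n n (f - g) hvanish
    have hsub : Ideal.span (Set.range fun i : Fin n =>
        ∏ j : Fin n, (X i - C (((j : ℕ) : ℚ) + 1))) ≤ permIdeal n := by
      rw [Ideal.span_le]
      rintro y ⟨i, rfl⟩
      exact prod_mem_permIdeal n i
    have := Ideal.add_mem _ (hsub hfg) hgmem
    simpa using this
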